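/- If an edge of level 1 is added to the grounded iteration at step l > 2 (i.e., belongs to Γ^l(∅) \ Γ^{l-1}(∅)), then there exists another edge of level 1 belonging to Γ^{l-1}(∅) \ Γ^{l-2}(∅). -/
import Mathlib


/-- In a SETAF with attack relation `att`, the set `S` attacks argument `a` if some
subset of `S` attacks `a`. -/
def setafAttacks {A : Type*} (att : Set A → A → Prop) (S : Set A) (a : A) : Prop :=
  ∃ C ⊆ S, att C a

/-- The characteristic function of a SETAF: `Γ S` is the set of arguments defended by
`S`, i.e. such that every attacker set contains an element attacked by `S`. -/
def charFun {A : Type*} (att : Set A → A → Prop) (S : Set A) : Set A :=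
  {a | ∀ E, att E a → ∃ e ∈ E, setafAttacks att S e}

/-- The SETAF attack of the cycle KB: a set `C` of edges attacks the edge `e` iff
`C ∪ {e}` is a conflict (a minimal directed cycle) and `e` is of least importance
(maximal level index) within the cycle. -/
def cycAtt {E : Type*} (Cyc : Set (Set E)) (lvl : E → ℕ) (C : Set E) (e : E) : Prop :=
  e ∉ C ∧ insert e C ∈ Cyc ∧ ∀ e' ∈ C, lvl e' ≤ lvl e

/-- An argument attacked by the empty set is never defended. -/
lemma not_defended_of_empty_attack {A : Type*} (att : Set A → A → Prop) (T : Set A)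
    (w : A) (h1 : setafAttacks att ∅ w) (h2 : w ∈ charFun att T) : False := by
  obtain ⟨C₀, hsub, hatt⟩ := h1
  rw [Set.subset_empty_iff] at hsub
  subst hsub
  obtain ⟨x, hx, -⟩ := h2 ∅ hatt
  exact hx

/-- Descent lemma: if `a` enters the grounded iteration at step `m+2`, then some edge
of level `≤ lvl a` enters at step `m+1`. -/
lemma descent {E : Type*} (Cyc : Set (Set E)) (lvl : E → ℕ) (a : E) (m : ℕ)
    (h1 : a ∈ (charFun (cycAtt Cyc lvl))^[m+2] ∅)
    (h2 : a ∉ (charFun (cycAtt Cyc lvl))^[m+1] ∅) :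
    ∃ b : E, lvl b ≤ lvl a ∧ b ∈ (charFun (cycAtt Cyc lvl))^[m+1] ∅ ∧
      b ∉ (charFun (cycAtt Cyc lvl))^[m] ∅ := by
  rw [Function.iterate_succ_apply'] at h1 h2
  simp only [charFun, Set.mem_setOf_eq] at h1 h2
  push_neg at h2
  obtain ⟨A, hA, hAu⟩ := h2
  obtain ⟨u, huA, C, hCsub, hCatt⟩ := h1 A hA
  have hnot : ¬ C ⊆ (charFun (cycAtt Cyc lvl))^[m] ∅ := fun h => hAu u huA ⟨C, h, hCatt⟩
  obtain ⟨b, hbC, hbnot⟩ := Set.not_subset.mp hnot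
  exact ⟨b, le_trans (hCatt.2.2 b hbC) (hA.2.2 u huA), hCsub hbC, hbnot⟩

/-- A level-0 edge in `Γ^2(∅)` is already in `Γ^1(∅)`. -/
lemma level_zero_base {E : Type*} (Cyc : Set (Set E)) (lvl : E → ℕ) (c : E)
    (hc : lvl c = 0) (h1 : c ∈ (charFun (cycAtt Cyc lvl))^[2] ∅) :
    c ∈ (charFun (cycAtt Cyc lvl))^[1] ∅ := by
  by_contra h2
  rw [show (2:ℕ) = 1 + 1 from rfl, Function.iterate_succ_apply'] at h1
  rw [Function.iterate_one] at h1 h2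
  simp only [charFun, Set.mem_setOf_eq] at h1 h2
  push_neg at h2
  obtain ⟨A, hA, hAu⟩ := h2
  obtain ⟨u, huA, C, hCsub, hCatt⟩ := h1 A hA
  -- levels are all 0
  have hu0 : lvl u = 0 := Nat.le_zero.mp (hc ▸ hA.2.2 u huA)
  -- C is nonempty
  have hCne : C.Nonempty := by
    rcases Set.eq_empty_or_nonempty C with h | h
    · exact absurd ⟨C, h ▸ Set.Subset.rfl, hCatt⟩ (hAu u huA)
    · exact h
  obtain ⟨v, hvC⟩ := hCne
  have hv0 : lvl v = 0 := Nat.le_zero.mp (hu0 ▸ hCatt.2.2 v hvC)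
  have hvu : v ≠ u := fun h => hCatt.1 (h ▸ hvC)
  -- the rest of the cycle attacks v
  have hattv : cycAtt Cyc lvl (insert u (C \ {v})) v := by
    refine ⟨?_, ?_, ?_⟩
    · intro hv
      rcases hv with h | h
      · exact hvu h
      · exact h.2 rfl
    · have : insert v (insert u (C \ {v})) = insert u C := by
        rw [Set.insert_comm, Set.insert_diff_singleton, Set.insert_eq_self.mpr hvC]
      rw [this]
      exact hCatt.2.1
    · intro w hw
      rcases hw with h | h
      · subst h; omega
      · have := hCatt.2.2 w h.1; omega
  -- v is in Γ^1(∅) = charFun ∅, so its attacker contains an ∅-attacked element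
  have hvmem : v ∈ charFun (cycAtt Cyc lvl) ∅ := hCsub hvC
  obtain ⟨w, hw, hwatt⟩ := hvmem _ hattv
  rcases hw with h | h
  · exact hAu u huA (h ▸ hwatt)
  · exact not_defended_of_empty_attack _ _ w hwatt (hCsub h.1)

/-- A level-0 edge in `Γ^{m+2}(∅)` is already in `Γ^{m+1}(∅)`. -/
lemma level_zero_prop {E : Type*} (Cyc : Set (Set E)) (lvl : E → ℕ) :
    ∀ (m : ℕ) (c : E), lvl c = 0 → c ∈ (charFun (cycAtt Cyc lvl))^[m+2] ∅ →
      c ∈ (charFun (cycAtt Cyc lvl))^[m+1] ∅ := by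
  intro m
  induction m with
  | zero => exact fun c hc h => level_zero_base Cyc lvl c hc h
  | succ k ih =>
    intro c hc h
    by_contra h2
    obtain ⟨b, hb0, hbin, hbnot⟩ := descent Cyc lvl c (k+1) h h2
    have : lvl b = 0 := by omega
    exact hbnot (ih b this hbin)

/-- If an edge of level 1 is added to the grounded iteration at step `l > 2`
(it belongs to `Γ^l(∅) \ Γ^{l-1}(∅)`), then some other edge of level 1 belongs to
`Γ^{l-1}(∅) \ Γ^{l-2}(∅)`. -/
theorem level_one_edge_propagation {E : Type*} [Finite E]
    (Cyc : Set (Set E)) (lvl : E → ℕ)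
    (e : E) (he : lvl e = 1) (l : ℕ) (hl : 2 < l)
    (h₁ : e ∈ (charFun (cycAtt Cyc lvl))^[l] ∅)
    (h₂ : e ∉ (charFun (cycAtt Cyc lvl))^[l - 1] ∅) :
    ∃ e' : E, lvl e' = 1 ∧ e' ∈ (charFun (cycAtt Cyc lvl))^[l - 1] ∅ ∧
      e' ∉ (charFun (cycAtt Cyc lvl))^[l - 2] ∅ := by
  obtain ⟨k, rfl⟩ : ∃ k, l = k + 3 := ⟨l - 3, by omega⟩
  have e1 : k + 3 - 1 = (k + 1) + 1 := by omega
  have e2 : k + 3 - 2 = k + 1 := by omega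
  rw [e1] at h₂
  rw [e1, e2]
  obtain ⟨b, hb1, hbin, hbnot⟩ := descent Cyc lvl e (k+1) h₁ h₂
  rw [he] at hb1
  interval_cases h : lvl b
  · exact absurd (level_zero_prop Cyc lvl k b h hbin) hbnot
  · exact ⟨b, h, hbin, hbnot⟩
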